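/- For any strictly increasing real sequences x₁ < x₂ < ... < x_m and y₁ < y₂ < ... < y_m, the determinant det[exp(x_i · y_j)]_{1≤i,j≤m} is strictly positive. -/

import Mathlib

open Real Finset

lemma expPoly_zero : ∀ (m : ℕ) (y : Fin m → ℝ), StrictMono y →
    ∀ (c : Fin m → ℝ) (x : Fin m → ℝ), StrictMono x →
    (∀ i, ∑ j, c j * Real.exp (x i * y j) = 0) → c = 0 := by
  intro m
  induction m with
  | zero => intro y _ c x _ _; funext j; exact absurd j.2 (by omega)
  | succ n ih =>
    intro y hy c x hx hsum
    set g : ℝ → ℝ := fun t => ∑ j, c j * Real.exp (t * (y j - y 0)) with hg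
    have hgroot : ∀ i, g (x i) = 0 := by
      intro i
      have := hsum i
      have h2 : (∑ j, c j * Real.exp (x i * y j)) * Real.exp (-(x i * y 0)) = 0 := by
        rw [this]; ring
      rw [Finset.sum_mul] at h2
      rw [hg]
      rw [← h2]
      apply Finset.sum_congr rfl
      intro j _
      rw [mul_assoc, ← Real.exp_add]
      ring_nf
    have hderiv : ∀ t : ℝ, HasDerivAt g
        (∑ j, c j * (Real.exp (t * (y j - y 0)) * (y j - y 0))) t := by
      intro t
      apply HasDerivAt.fun_sum
      intro j _
      exact ((hasDerivAt_mul_const (y j - y 0)).exp).const_mul (c j)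
    have hz : ∀ i : Fin n, ∃ z ∈ Set.Ioo (x i.castSucc) (x i.succ),
        (∑ j, c j * (Real.exp (z * (y j - y 0)) * (y j - y 0))) = 0 := by
      intro i
      have hlt : x i.castSucc < x i.succ := hx (Fin.castSucc_lt_succ (i := i))
      have := exists_hasDerivAt_eq_zero (f := g)
        (f' := fun t => ∑ j, c j * (Real.exp (t * (y j - y 0)) * (y j - y 0)))
        hlt (fun t _ => (hderiv t).continuousAt.continuousWithinAt)
        (by rw [hgroot, hgroot]) (fun t _ => hderiv t)
      obtain ⟨z, hz1, hz2⟩ := this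
      exact ⟨z, hz1, hz2⟩
    choose z hz1 hz2 using hz
    have hzm : StrictMono z := by
      intro i k hik
      calc z i < x i.succ := (hz1 i).2
        _ ≤ x k.castSucc := hx.monotone (by
            rw [Fin.le_def]
            simp only [Fin.val_succ, Fin.coe_castSucc]
            exact hik)
        _ < z k := (hz1 k).1
    have key : (fun j : Fin n => c j.succ * (y j.succ - y 0)) = 0 := by
      apply ih (fun j => y j.succ - y 0)
        (fun a b hab => by simp only [sub_lt_sub_iff_right]; exact hy (Fin.succ_lt_succ_iff.mpr hab))
        _ z hzm
      intro i
      have := hz2 i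
      rw [Fin.sum_univ_succ] at this
      simp only [sub_self, mul_zero, zero_mul, mul_zero, zero_add] at this
      rw [← this]
      apply Finset.sum_congr rfl
      intro j _
      ring
    have hcs : ∀ j : Fin n, c j.succ = 0 := by
      intro j
      have h1 := congrFun key j
      have h2 : y 0 < y j.succ := hy (Fin.succ_pos j)
      simp only [Pi.zero_apply, mul_eq_zero] at h1
      rcases h1 with h | h
      · exact h
      · linarith
    have hc0 : c 0 = 0 := by
      have := hsum 0
      rw [Fin.sum_univ_succ] at this
      simp only [hcs, zero_mul, Finset.sum_const_zero, add_zero] at this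
      have := mul_eq_zero.mp this
      rcases this with h | h
      · exact h
      · exact absurd h (Real.exp_ne_zero _)
    funext j
    rcases Fin.eq_zero_or_eq_succ j with h | ⟨k, rfl⟩
    · rw [h]; exact hc0
    · exact hcs k

lemma expKernel_det_ne_zero (m : ℕ) (x y : Fin m → ℝ)
    (hx : StrictMono x) (hy : StrictMono y) :
    Matrix.det (Matrix.of fun i j => Real.exp (x i * y j)) ≠ 0 := by
  intro h
  obtain ⟨v, hv, hmv⟩ := (Matrix.exists_mulVec_eq_zero_iff).2 h
  apply hv
  apply expPoly_zero m y hy v x hx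
  intro i
  have := congrFun hmv i
  simp only [Matrix.mulVec, dotProduct, Matrix.of_apply, Pi.zero_apply] at this
  rw [← this]
  apply Finset.sum_congr rfl
  intro j _
  ring

theorem exp_kernel_strictly_totally_positive (m : ℕ) (x y : Fin m → ℝ)
    (hx : StrictMono x) (hy : StrictMono y) :
    0 < Matrix.det (Matrix.of fun i j => Real.exp (x i * y j)) := by
  set w0 : Fin m → ℝ := fun j => j with hw0
  set G : (Fin m → ℝ) → ℝ :=
    fun wv => Matrix.det (Matrix.of fun i j => Real.exp (x i * wv j)) with hG
  set F : ℝ → ℝ := fun s => G (fun j => (1 - s) * y j + s * w0 j) with hF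
  have hys : ∀ s ∈ Set.Icc (0:ℝ) 1, StrictMono (fun j : Fin m => (1 - s) * y j + s * w0 j) := by
    intro s hs a b hab
    have h1 : y a < y b := hy hab
    have h2 : w0 a < w0 b := by
      rw [hw0]; dsimp only; exact_mod_cast hab
    obtain ⟨hs0, hs1⟩ := hs
    dsimp only
    rcases hs0.lt_or_eq with hpos | h0
    · nlinarith [mul_pos hpos (sub_pos.2 h2),
        mul_nonneg (by linarith : (0:ℝ) ≤ 1 - s) (sub_pos.2 h1).le]
    · rw [← h0]; simpa using h1
  have hFne : ∀ s ∈ Set.Icc (0:ℝ) 1, F s ≠ 0 := fun s hs =>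
    expKernel_det_ne_zero m x _ hx (hys s hs)
  have hFcont : Continuous F := by
    rw [hF, hG]
    apply Continuous.matrix_det
    apply continuous_matrix
    intro i j
    simp only [Matrix.of_apply]
    fun_prop
  have hF1 : 0 < F 1 := by
    have e0 : (fun j => (1 - (1:ℝ)) * y j + 1 * w0 j) = w0 := by funext j; ring
    have e1 : (Matrix.of fun i j : Fin m => Real.exp (x i * w0 j))
        = Matrix.vandermonde fun i => Real.exp (x i) := by
      ext i j
      rw [Matrix.of_apply, Matrix.vandermonde_apply, hw0, mul_comm, Real.exp_nat_mul]
    rw [hF]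
    dsimp only
    rw [e0, hG]
    dsimp only
    rw [e1, Matrix.det_vandermonde]
    apply Finset.prod_pos
    intro i _
    apply Finset.prod_pos
    intro j hj
    rw [Finset.mem_Ioi] at hj
    exact sub_pos.2 (Real.exp_lt_exp.mpr (hx hj))
  have hF0 : F 0 = Matrix.det (Matrix.of fun i j => Real.exp (x i * y j)) := by
    have e0 : (fun j => (1 - (0:ℝ)) * y j + 0 * w0 j) = y := by funext j; ring
    rw [hF]
    dsimp only
    rw [e0, hG]
  rw [← hF0]
  by_contra hle
  push_neg at hle
  have hlt : F 0 < 0 := lt_of_le_of_ne hle (hFne 0 (by norm_num))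
  have h0m : (0:ℝ) ∈ Set.Icc (F 0) (F 1) := ⟨le_of_lt hlt, le_of_lt hF1⟩
  obtain ⟨s, hs, hFs⟩ := intermediate_value_Icc (by norm_num : (0:ℝ) ≤ 1) hFcont.continuousOn h0m
  exact hFne s hs hFs
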